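/- Let (E₁, E₂, φ) be a q-stable torsion-free triple with q(m) a polynomial with positive values for m ≫ 0. Then the natural map Hom_S(E₂, E₂) → Hom_S(E₁, E₂), f ↦ f∘φ, is injective; equivalently, there is no nonzero endomorphism f of E₂ with f∘φ = 0. -/

import Mathlib

/-- For a `q`-stable torsion-free triple `(E₁, E₂, φ)` with `q > 0`
(for `m ≫ 0`), the map `Hom(E₂,E₂) → Hom(E₁,E₂)`, `f ↦ f ∘ φ`, is injective.
Modelled with modules: `rk, P : Submodule R E₂ → F` are the rank and Hilbert
polynomial functions (additive on kernel/image of endomorphisms, positive rank on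
nonzero subsheaves by torsion-freeness), `q`-stability gives for every proper
nonzero subsheaf `N` of `E₂` (applied to `ker f` and `im f`) the inequality
`P(N)/rk(N) + q/rk(N) < P(E₂)/r₂ + q/r₂`, and `φ` is nonzero. -/
theorem stmt9 {R F : Type*} [CommRing R] [Field F] [LinearOrder F] [IsStrictOrderedRing F]
    {E₁ E₂ : Type*} [AddCommGroup E₁] [Module R E₁] [AddCommGroup E₂] [Module R E₂]
    (φ : E₁ →ₗ[R] E₂)
    (r₂ q : F) (hq : 0 < q) (hr₂ : 0 < r₂)
    (rk P : Submodule R E₂ → F)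
    (hrk_top : rk ⊤ = r₂)
    (hrk0 : ∀ N : Submodule R E₂, rk N = 0 → N = ⊥)
    (hrkpos : ∀ N : Submodule R E₂, N ≠ ⊥ → 0 < rk N)
    (hadd : ∀ f : E₂ →ₗ[R] E₂,
      rk (LinearMap.ker f) + rk (LinearMap.range f) = r₂ ∧
      P (LinearMap.ker f) + P (LinearMap.range f) = P ⊤)
    (hstab : ∀ N : Submodule R E₂, N ≠ ⊥ → N ≠ ⊤ →
      P N / rk N + q / rk N < P ⊤ / r₂ + q / r₂)
    (hφ : LinearMap.range φ ≠ ⊥) :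
    Function.Injective (fun f : E₂ →ₗ[R] E₂ => f ∘ₗ φ) := by
  intro f g hfg
  by_contra hne
  set d : E₂ →ₗ[R] E₂ := f - g with hd
  have hd0 : d ≠ 0 := sub_ne_zero.mpr hne
  have hcomp : d ∘ₗ φ = 0 := by
    simp only [hd, LinearMap.sub_comp]
    simpa [sub_eq_zero] using congrArg id hfg
  -- range φ ≤ ker d
  have hker_ne_bot : LinearMap.ker d ≠ ⊥ := by
    intro h
    apply hφ
    rw [← le_bot_iff, ← h]
    intro x hx
    obtain ⟨y, rfl⟩ := hx
    have := congrFun (congrArg DFunLike.coe hcomp) y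
    simpa [LinearMap.mem_ker] using this
  have hrange_ne_bot : LinearMap.range d ≠ ⊥ := by
    intro h
    apply hd0
    ext x
    have : d x ∈ LinearMap.range d := ⟨x, rfl⟩
    rw [h] at this
    simpa using this
  obtain ⟨haddrk, haddP⟩ := hadd d
  have hker_ne_top : LinearMap.ker d ≠ ⊤ := by
    intro h
    apply hd0
    ext x
    have : x ∈ LinearMap.ker d := h ▸ Submodule.mem_top
    simpa using this
  have hrange_ne_top : LinearMap.range d ≠ ⊤ := by
    intro h
    apply hker_ne_bot
    apply hrk0
    have : rk (LinearMap.range d) = r₂ := by rw [h, hrk_top]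
    linarith
  have hK := hstab _ hker_ne_bot hker_ne_top
  have hI := hstab _ hrange_ne_bot hrange_ne_top
  have hKpos := hrkpos _ hker_ne_bot
  have hIpos := hrkpos _ hrange_ne_bot
  have hK' : (P (LinearMap.ker d) + q) * r₂ < (P ⊤ + q) * rk (LinearMap.ker d) := by
    rw [← div_lt_div_iff₀ hKpos hr₂, add_div, add_div]; exact hK
  have hI' : (P (LinearMap.range d) + q) * r₂ < (P ⊤ + q) * rk (LinearMap.range d) := by
    rw [← div_lt_div_iff₀ hIpos hr₂, add_div, add_div]; exact hI
  have key : (P ⊤ + 2*q) * r₂ < (P ⊤ + q) * r₂ := by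
    calc (P ⊤ + 2*q) * r₂
        = (P (LinearMap.ker d) + q) * r₂ + (P (LinearMap.range d) + q) * r₂ := by
          rw [← haddP]; ring
      _ < (P ⊤ + q) * rk (LinearMap.ker d) + (P ⊤ + q) * rk (LinearMap.range d) :=
          add_lt_add hK' hI'
      _ = (P ⊤ + q) * r₂ := by rw [← haddrk]; ring
  nlinarith [key, hq, hr₂]
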